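/- The statistic MMD_u²(X, X') = (1/(m(m−1))) Σ_{i≠j} k(x_i, x_j) − (2/(mn)) Σ_{i,j} k(x_i, x'_j) + (1/(n(n−1))) Σ_{i≠j} k(x'_i, x'_j) is an unbiased estimator of MMD²(P,Q): its expectation over i.i.d. samples x_1,...,x_m ~ P and x'_1,...,x'_n ~ Q equals MMD²(P,Q). -/

import Mathlib

open MeasureTheory ProbabilityTheory Finset

lemma aux_int {Ω X : Type*} [MeasurableSpace Ω] [MeasurableSpace X]
    (μ : Measure Ω) (ν₁ ν₂ : Measure X) (f g : Ω → X)
    (hf : Measurable f) (hg : Measurable g)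
    (hmap : Measure.map (fun ω => (f ω, g ω)) μ = ν₁.prod ν₂)
    (k : X → X → ℝ)
    (hk : Integrable (fun p => k p.1 p.2) (ν₁.prod ν₂)) :
    (∫ ω, k (f ω) (g ω) ∂μ) = (∫ p, k p.1 p.2 ∂(ν₁.prod ν₂)) ∧
      Integrable (fun ω => k (f ω) (g ω)) μ := by
  have hpm : Measurable fun ω => (f ω, g ω) := hf.prodMk hg
  have hks : AEStronglyMeasurable (fun p : X × X => k p.1 p.2)
      (Measure.map (fun ω => (f ω, g ω)) μ) := by
    rw [hmap]; exact hk.1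
  constructor
  · rw [← hmap, integral_map hpm.aemeasurable hks]
  · exact (integrable_map_measure hks hpm.aemeasurable).mp (by rw [hmap]; exact hk)

/-- The U-statistic
`MMD_u² = (1/(m(m−1))) ∑_{i≠j} k(x_i,x_j) − (2/(mn)) ∑_{i,j} k(x_i,x'_j)
          + (1/(n(n−1))) ∑_{i≠j} k(x'_i,x'_j)`
is an unbiased estimator of the population squared MMD: for mutually independent samples
`x_1,…,x_m ∼ P` and `x'_1,…,x'_n ∼ Q` (i.i.d., the two samples independent), its
expectation equals `E_{P×P}[k] − 2 E_{P×Q}[k] + E_{Q×Q}[k]`. -/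
theorem stmt9 {Ω X : Type*} [MeasurableSpace Ω] [MeasurableSpace X]
    (μ : Measure Ω) [IsProbabilityMeasure μ]
    (P Q : Measure X) [IsProbabilityMeasure P] [IsProbabilityMeasure Q]
    (m n : ℕ) (hm : 2 ≤ m) (hn : 2 ≤ n)
    (x : Fin m → Ω → X) (x' : Fin n → Ω → X)
    (hxm : ∀ i, Measurable (x i)) (hx'm : ∀ j, Measurable (x' j))
    (hindep : iIndepFun (β := fun _ : Fin m ⊕ Fin n => X)
      (Sum.elim x x') μ)
    (hxP : ∀ i, Measure.map (x i) μ = P)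
    (hx'Q : ∀ j, Measure.map (x' j) μ = Q)
    (k : X → X → ℝ) (hkm : Measurable (Function.uncurry k))
    (hkPP : Integrable (fun p => k p.1 p.2) (P.prod P))
    (hkPQ : Integrable (fun p => k p.1 p.2) (P.prod Q))
    (hkQQ : Integrable (fun p => k p.1 p.2) (Q.prod Q))
    (hstat : Integrable (fun ω =>
      (1 / (m * (m - 1) : ℝ)) * ∑ i : Fin m, ∑ j : Fin m with j ≠ i, k (x i ω) (x j ω)
        - (2 / (m * n : ℝ)) * ∑ i : Fin m, ∑ j : Fin n, k (x i ω) (x' j ω)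
        + (1 / (n * (n - 1) : ℝ)) *
            ∑ i : Fin n, ∑ j : Fin n with j ≠ i, k (x' i ω) (x' j ω)) μ) :
    (∫ ω, ((1 / (m * (m - 1) : ℝ)) *
          ∑ i : Fin m, ∑ j : Fin m with j ≠ i, k (x i ω) (x j ω)
        - (2 / (m * n : ℝ)) * ∑ i : Fin m, ∑ j : Fin n, k (x i ω) (x' j ω)
        + (1 / (n * (n - 1) : ℝ)) *
            ∑ i : Fin n, ∑ j : Fin n with j ≠ i, k (x' i ω) (x' j ω)) ∂μ) =
      (∫ p, k p.1 p.2 ∂(P.prod P)) - 2 * (∫ p, k p.1 p.2 ∂(P.prod Q)) +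
        ∫ p, k p.1 p.2 ∂(Q.prod Q) := by
  set I1 := ∫ p, k p.1 p.2 ∂(P.prod P) with hI1
  set I2 := ∫ p, k p.1 p.2 ∂(P.prod Q) with hI2
  set I3 := ∫ p, k p.1 p.2 ∂(Q.prod Q) with hI3
  -- pair laws
  have hPP : ∀ i j : Fin m, i ≠ j →
      (∫ ω, k (x i ω) (x j ω) ∂μ) = I1 ∧ Integrable (fun ω => k (x i ω) (x j ω)) μ := by
    intro i j hij
    have hind : IndepFun (x i) (x j) μ :=
      hindep.indepFun (i := Sum.inl i) (j := Sum.inl j) (by simpa using hij)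
    have hmap : Measure.map (fun ω => (x i ω, x j ω)) μ = P.prod P := by
      rw [(indepFun_iff_map_prod_eq_prod_map_map (hxm i).aemeasurable
        (hxm j).aemeasurable).mp hind, hxP i, hxP j]
    exact aux_int μ P P (x i) (x j) (hxm i) (hxm j) hmap k hkPP
  have hPQ : ∀ (i : Fin m) (j : Fin n),
      (∫ ω, k (x i ω) (x' j ω) ∂μ) = I2 ∧ Integrable (fun ω => k (x i ω) (x' j ω)) μ := by
    intro i j
    have hind : IndepFun (x i) (x' j) μ :=
      hindep.indepFun (i := Sum.inl i) (j := Sum.inr j) (by simp)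
    have hmap : Measure.map (fun ω => (x i ω, x' j ω)) μ = P.prod Q := by
      rw [(indepFun_iff_map_prod_eq_prod_map_map (hxm i).aemeasurable
        (hx'm j).aemeasurable).mp hind, hxP i, hx'Q j]
    exact aux_int μ P Q (x i) (x' j) (hxm i) (hx'm j) hmap k hkPQ
  have hQQ : ∀ i j : Fin n, i ≠ j →
      (∫ ω, k (x' i ω) (x' j ω) ∂μ) = I3 ∧ Integrable (fun ω => k (x' i ω) (x' j ω)) μ := by
    intro i j hij
    have hind : IndepFun (x' i) (x' j) μ :=
      hindep.indepFun (i := Sum.inr i) (j := Sum.inr j) (by simpa using hij)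
    have hmap : Measure.map (fun ω => (x' i ω, x' j ω)) μ = Q.prod Q := by
      rw [(indepFun_iff_map_prod_eq_prod_map_map (hx'm i).aemeasurable
        (hx'm j).aemeasurable).mp hind, hx'Q i, hx'Q j]
    exact aux_int μ Q Q (x' i) (x' j) (hx'm i) (hx'm j) hmap k hkQQ
  -- integrability of the pieces
  have intS1 : Integrable (fun ω => ∑ i : Fin m, ∑ j : Fin m with j ≠ i, k (x i ω) (x j ω)) μ :=
    integrable_finset_sum _ fun i _ => integrable_finset_sum _ fun j hj =>
      (hPP i j (Ne.symm (mem_filter.mp hj).2)).2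
  have intS2 : Integrable (fun ω => ∑ i : Fin m, ∑ j : Fin n, k (x i ω) (x' j ω)) μ :=
    integrable_finset_sum _ fun i _ => integrable_finset_sum _ fun j _ => (hPQ i j).2
  have intS3 : Integrable (fun ω => ∑ i : Fin n, ∑ j : Fin n with j ≠ i, k (x' i ω) (x' j ω)) μ :=
    integrable_finset_sum _ fun i _ => integrable_finset_sum _ fun j hj =>
      (hQQ i j (Ne.symm (mem_filter.mp hj).2)).2
  have hm1 : ((m : ℝ) - 1) ≠ 0 := by
    have : (2 : ℝ) ≤ m := by exact_mod_cast hm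
    linarith
  have hm0 : (m : ℝ) ≠ 0 := by
    have : (2 : ℝ) ≤ m := by exact_mod_cast hm
    linarith
  have hn1 : ((n : ℝ) - 1) ≠ 0 := by
    have : (2 : ℝ) ≤ n := by exact_mod_cast hn
    linarith
  have hn0 : (n : ℝ) ≠ 0 := by
    have : (2 : ℝ) ≤ n := by exact_mod_cast hn
    linarith
  have e1 : (∫ ω, (∑ i : Fin m, ∑ j : Fin m with j ≠ i, k (x i ω) (x j ω)) ∂μ)
      = ((m : ℝ) * ((m : ℝ) - 1)) * I1 := by
    rw [integral_finset_sum _ (fun i _ => integrable_finset_sum _ fun j hj =>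
      (hPP i j (Ne.symm (mem_filter.mp hj).2)).2)]
    rw [Finset.sum_congr rfl fun i _ => integral_finset_sum _ fun j hj =>
      (hPP i j (Ne.symm (mem_filter.mp hj).2)).2]
    rw [Finset.sum_congr rfl fun i _ => Finset.sum_congr rfl fun j hj =>
      (hPP i j (Ne.symm (mem_filter.mp hj).2)).1]
    simp only [Finset.filter_ne', Finset.sum_const,
      Finset.card_erase_of_mem (Finset.mem_univ _), Finset.card_univ, Fintype.card_fin,
      nsmul_eq_mul]
    rw [Nat.cast_pred (by omega)]
    ring
  have e2 : (∫ ω, (∑ i : Fin m, ∑ j : Fin n, k (x i ω) (x' j ω)) ∂μ)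
      = ((m : ℝ) * (n : ℝ)) * I2 := by
    rw [integral_finset_sum _ (fun i _ => integrable_finset_sum _ fun j _ => (hPQ i j).2)]
    rw [Finset.sum_congr rfl fun i _ => integral_finset_sum _ fun j _ => (hPQ i j).2]
    rw [Finset.sum_congr rfl fun i _ => Finset.sum_congr rfl fun j _ => (hPQ i j).1]
    simp only [Finset.sum_const, Finset.card_univ, Fintype.card_fin, nsmul_eq_mul]
    ring
  have e3 : (∫ ω, (∑ i : Fin n, ∑ j : Fin n with j ≠ i, k (x' i ω) (x' j ω)) ∂μ)
      = ((n : ℝ) * ((n : ℝ) - 1)) * I3 := by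
    rw [integral_finset_sum _ (fun i _ => integrable_finset_sum _ fun j hj =>
      (hQQ i j (Ne.symm (mem_filter.mp hj).2)).2)]
    rw [Finset.sum_congr rfl fun i _ => integral_finset_sum _ fun j hj =>
      (hQQ i j (Ne.symm (mem_filter.mp hj).2)).2]
    rw [Finset.sum_congr rfl fun i _ => Finset.sum_congr rfl fun j hj =>
      (hQQ i j (Ne.symm (mem_filter.mp hj).2)).1]
    simp only [Finset.filter_ne', Finset.sum_const,
      Finset.card_erase_of_mem (Finset.mem_univ _), Finset.card_univ, Fintype.card_fin,
      nsmul_eq_mul]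
    rw [Nat.cast_pred (by omega)]
    ring
  have hA : Integrable (fun ω =>
      (1 / (m * (m - 1) : ℝ)) * ∑ i : Fin m, ∑ j : Fin m with j ≠ i, k (x i ω) (x j ω)
        - (2 / (m * n : ℝ)) * ∑ i : Fin m, ∑ j : Fin n, k (x i ω) (x' j ω)) μ :=
    (intS1.const_mul _).sub (intS2.const_mul _)
  have hC : Integrable (fun ω => (1 / (n * (n - 1) : ℝ)) *
      ∑ i : Fin n, ∑ j : Fin n with j ≠ i, k (x' i ω) (x' j ω)) μ := intS3.const_mul _
  rw [integral_add hA hC,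
    integral_sub (intS1.const_mul (1 / (m * (m - 1) : ℝ))) (intS2.const_mul (2 / (m * n : ℝ))),
    integral_const_mul, integral_const_mul, integral_const_mul, e1, e2, e3]
  field_simp
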